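/- Let 𝒜(D,k) be the augmented Maxwell operator 𝒰 = (u¹,a¹,u²,a²) ↦ (i curl u² + i∇a² − k u¹, −i div u² − k a¹, −i curl u¹ − i∇a¹ − k u², i div u¹ − k a²) on a smooth bounded domain G ⊆ ℝ³, with boundary operator ℬ𝒰 = (ν × u¹, ⟨u², ν⟩, a²) and 𝒬𝒱 = (−i v², −i b¹, i⟨v¹, ν⟩). Then the Green formula (𝒜(D,k)𝒰, 𝒱)_G + (ℬ𝒰, 𝒬𝒱)_{∂G} = (𝒰, 𝒜(D,k)𝒱)_G + (𝒬𝒰, ℬ𝒱)_{∂G} holds for all smooth 𝒰 = (u¹,a¹,u²,a²) and 𝒱 = (v¹,b¹,v²,b²). -/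

import Mathlib

open MeasureTheory

noncomputable def pd3 (i : Fin 3) (f : (Fin 3 → ℝ) → ℂ) (x : Fin 3 → ℝ) : ℂ :=
  fderiv ℝ f x (Pi.single i 1)

noncomputable def curl3 (F : (Fin 3 → ℝ) → Fin 3 → ℂ) (x : Fin 3 → ℝ) : Fin 3 → ℂ :=
  ![pd3 1 (fun y => F y 2) x - pd3 2 (fun y => F y 1) x,
    pd3 2 (fun y => F y 0) x - pd3 0 (fun y => F y 2) x,
    pd3 0 (fun y => F y 1) x - pd3 1 (fun y => F y 0) x]

noncomputable def div3 (F : (Fin 3 → ℝ) → Fin 3 → ℂ) (x : Fin 3 → ℝ) : ℂ :=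
  pd3 0 (fun y => F y 0) x + pd3 1 (fun y => F y 1) x + pd3 2 (fun y => F y 2) x

noncomputable def grad3 (f : (Fin 3 → ℝ) → ℂ) (x : Fin 3 → ℝ) : Fin 3 → ℂ :=
  ![pd3 0 f x, pd3 1 f x, pd3 2 f x]

noncomputable def ccross3 (a b : Fin 3 → ℂ) : Fin 3 → ℂ :=
  ![a 1 * b 2 - a 2 * b 1, a 2 * b 0 - a 0 * b 2, a 0 * b 1 - a 1 * b 0]

/-- The augmented Maxwell operator 𝒜(D,k). -/
noncomputable def AOp (k : ℝ)
    (u1 : (Fin 3 → ℝ) → Fin 3 → ℂ) (a1 : (Fin 3 → ℝ) → ℂ)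
    (u2 : (Fin 3 → ℝ) → Fin 3 → ℂ) (a2 : (Fin 3 → ℝ) → ℂ)
    (x : Fin 3 → ℝ) : (Fin 3 → ℂ) × ℂ × (Fin 3 → ℂ) × ℂ :=
  ((fun j => Complex.I * curl3 u2 x j + Complex.I * grad3 a2 x j - (k : ℂ) * u1 x j),
   -Complex.I * div3 u2 x - (k : ℂ) * a1 x,
   (fun j => -Complex.I * curl3 u1 x j - Complex.I * grad3 a1 x j - (k : ℂ) * u2 x j),
   Complex.I * div3 u1 x - (k : ℂ) * a2 x)

/-- The boundary operator ℬ𝒰 = (ν × u¹, ⟨u², ν⟩, a²). -/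
noncomputable def BOp (ν : (Fin 3 → ℝ) → Fin 3 → ℝ)
    (u1 u2 : (Fin 3 → ℝ) → Fin 3 → ℂ) (a2 : (Fin 3 → ℝ) → ℂ)
    (x : Fin 3 → ℝ) : (Fin 3 → ℂ) × ℂ × ℂ :=
  (ccross3 (fun i => (ν x i : ℂ)) (u1 x), ∑ j : Fin 3, u2 x j * (ν x j : ℂ), a2 x)

/-- The complementary boundary operator 𝒬𝒱 = (−i v², −i b¹, i⟨v¹, ν⟩). -/
noncomputable def QOp (ν : (Fin 3 → ℝ) → Fin 3 → ℝ)
    (v1 : (Fin 3 → ℝ) → Fin 3 → ℂ) (b1 : (Fin 3 → ℝ) → ℂ)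
    (v2 : (Fin 3 → ℝ) → Fin 3 → ℂ)
    (x : Fin 3 → ℝ) : (Fin 3 → ℂ) × ℂ × ℂ :=
  ((fun j => -Complex.I * v2 x j), -Complex.I * b1 x,
    Complex.I * ∑ j : Fin 3, v1 x j * (ν x j : ℂ))

/-- Pointwise hermitian pairing of 8-component vectors. -/
noncomputable def ip8 (P Q : (Fin 3 → ℂ) × ℂ × (Fin 3 → ℂ) × ℂ) : ℂ :=
  (∑ j : Fin 3, P.1 j * (starRingEnd ℂ) (Q.1 j)) + P.2.1 * (starRingEnd ℂ) Q.2.1 +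
    (∑ j : Fin 3, P.2.2.1 j * (starRingEnd ℂ) (Q.2.2.1 j)) +
    P.2.2.2 * (starRingEnd ℂ) Q.2.2.2

/-- Pointwise hermitian pairing of 5-component boundary vectors. -/
noncomputable def ip5 (P Q : (Fin 3 → ℂ) × ℂ × ℂ) : ℂ :=
  (∑ j : Fin 3, P.1 j * (starRingEnd ℂ) (Q.1 j)) + P.2.1 * (starRingEnd ℂ) Q.2.1 +
    P.2.2 * (starRingEnd ℂ) Q.2.2

/-! ### auxiliary material -/

@[fun_prop] theorem conj_differentiable : Differentiable ℝ (fun z : ℂ => (starRingEnd ℂ) z) :=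
  Complex.conjCLE.differentiable

@[fun_prop] theorem conj_contDiff {n : WithTop ℕ∞} :
    ContDiff ℝ n (fun z : ℂ => (starRingEnd ℂ) z) :=
  Complex.conjCLE.contDiff

/-- The auxiliary vector field whose divergence realizes the difference of the two
volume integrands, and whose normal component realizes the boundary pairings. -/
noncomputable def Wf (A C : (Fin 3 → ℝ) → Fin 3 → ℂ) (E : (Fin 3 → ℝ) → ℂ)
    (B : (Fin 3 → ℝ) → Fin 3 → ℂ) (D : (Fin 3 → ℝ) → ℂ) (F : (Fin 3 → ℝ) → Fin 3 → ℂ)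
    (y : Fin 3 → ℝ) : Fin 3 → ℂ :=
  ![Complex.I * (A y 1 * (starRingEnd ℂ) (B y 2) - A y 2 * (starRingEnd ℂ) (B y 1)
      + C y 0 * (starRingEnd ℂ) (D y) - E y * (starRingEnd ℂ) (F y 0)),
    Complex.I * (A y 2 * (starRingEnd ℂ) (B y 0) - A y 0 * (starRingEnd ℂ) (B y 2)
      + C y 1 * (starRingEnd ℂ) (D y) - E y * (starRingEnd ℂ) (F y 1)),
    Complex.I * (A y 0 * (starRingEnd ℂ) (B y 1) - A y 1 * (starRingEnd ℂ) (B y 0)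
      + C y 2 * (starRingEnd ℂ) (D y) - E y * (starRingEnd ℂ) (F y 2))]

lemma pd3_conj (i : Fin 3) (g : (Fin 3 → ℝ) → ℂ) (x : Fin 3 → ℝ) :
    pd3 i (fun y => (starRingEnd ℂ) (g y)) x = (starRingEnd ℂ) (pd3 i g x) := by
  have : (fun y => (starRingEnd ℂ) (g y)) = (Complex.conjCLE : ℂ ≃L[ℝ] ℂ) ∘ g := rfl
  rw [pd3, this, ContinuousLinearEquiv.comp_fderiv]
  rfl

lemma pd3_mul (i : Fin 3) {f g : (Fin 3 → ℝ) → ℂ} {x : Fin 3 → ℝ}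
    (hf : DifferentiableAt ℝ f x) (hg : DifferentiableAt ℝ g x) :
    pd3 i (fun y => f y * g y) x = pd3 i f x * g x + f x * pd3 i g x := by
  simp only [pd3, fderiv_fun_mul hf hg, ContinuousLinearMap.add_apply,
    ContinuousLinearMap.smul_apply, smul_eq_mul]
  ring

lemma pd3_add (i : Fin 3) {f g : (Fin 3 → ℝ) → ℂ} {x : Fin 3 → ℝ}
    (hf : DifferentiableAt ℝ f x) (hg : DifferentiableAt ℝ g x) :
    pd3 i (fun y => f y + g y) x = pd3 i f x + pd3 i g x := by
  simp [pd3, fderiv_fun_add hf hg]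

lemma pd3_sub (i : Fin 3) {f g : (Fin 3 → ℝ) → ℂ} {x : Fin 3 → ℝ}
    (hf : DifferentiableAt ℝ f x) (hg : DifferentiableAt ℝ g x) :
    pd3 i (fun y => f y - g y) x = pd3 i f x - pd3 i g x := by
  simp [pd3, fderiv_fun_sub hf hg]

lemma pd3_const_mul (i : Fin 3) (c : ℂ) {f : (Fin 3 → ℝ) → ℂ} {x : Fin 3 → ℝ}
    (hf : DifferentiableAt ℝ f x) :
    pd3 i (fun y => c * f y) x = c * pd3 i f x := by
  simp [pd3, fderiv_const_mul hf c]

/-- The key pointwise identity for the volume integrands. -/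
lemma key_identity (k : ℝ) (u1 u2 v1 v2 : (Fin 3 → ℝ) → Fin 3 → ℂ)
    (a1 a2 b1 b2 : (Fin 3 → ℝ) → ℂ) (x : Fin 3 → ℝ)
    (hu1 : DifferentiableAt ℝ u1 x) (hu2 : DifferentiableAt ℝ u2 x)
    (hv1 : DifferentiableAt ℝ v1 x) (hv2 : DifferentiableAt ℝ v2 x)
    (ha1 : DifferentiableAt ℝ a1 x) (ha2 : DifferentiableAt ℝ a2 x)
    (hb1 : DifferentiableAt ℝ b1 x) (hb2 : DifferentiableAt ℝ b2 x) :
    ip8 (AOp k u1 a1 u2 a2 x) (v1 x, b1 x, v2 x, b2 x) + div3 (Wf u1 u2 a2 v2 b1 v1) x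
      = ip8 (u1 x, a1 x, u2 x, a2 x) (AOp k v1 b1 v2 b2 x) + div3 (Wf u2 u1 a1 v1 b2 v2) x := by
  simp only [ip8, AOp, Wf, div3, curl3, grad3, ccross3, Fin.sum_univ_three,
    Matrix.cons_val_zero, Matrix.cons_val_one, Matrix.head_cons, Matrix.cons_val_two,
    Matrix.tail_cons]
  simp (disch := fun_prop) only [pd3_const_mul, pd3_add, pd3_sub, pd3_mul, pd3_conj]
  simp only [map_add, map_sub, map_mul, map_neg, Complex.conj_I, Complex.conj_ofReal]
  ring

/-- The first boundary identity. -/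
lemma boundary_B (ν : (Fin 3 → ℝ) → Fin 3 → ℝ) (u1 u2 v1 v2 : (Fin 3 → ℝ) → Fin 3 → ℂ)
    (a2 b1 : (Fin 3 → ℝ) → ℂ) (x : Fin 3 → ℝ) :
    ip5 (BOp ν u1 u2 a2 x) (QOp ν v1 b1 v2 x)
      = ∑ j : Fin 3, Wf u1 u2 a2 v2 b1 v1 x j * ((ν x j : ℝ) : ℂ) := by
  simp only [ip5, BOp, QOp, Wf, ccross3, Fin.sum_univ_three, Matrix.cons_val_zero,
    Matrix.cons_val_one, Matrix.head_cons, Matrix.cons_val_two, Matrix.tail_cons,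
    map_add, map_sub, map_mul, map_neg, Complex.conj_I, Complex.conj_ofReal]
  ring

/-- The second boundary identity. -/
lemma boundary_Q (ν : (Fin 3 → ℝ) → Fin 3 → ℝ) (u1 u2 v1 v2 : (Fin 3 → ℝ) → Fin 3 → ℂ)
    (a1 b2 : (Fin 3 → ℝ) → ℂ) (x : Fin 3 → ℝ) :
    ip5 (QOp ν u1 a1 u2 x) (BOp ν v1 v2 b2 x)
      = ∑ j : Fin 3, Wf u2 u1 a1 v1 b2 v2 x j * ((ν x j : ℝ) : ℂ) := by
  simp only [ip5, BOp, QOp, Wf, ccross3, Fin.sum_univ_three, Matrix.cons_val_zero,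
    Matrix.cons_val_one, Matrix.head_cons, Matrix.cons_val_two, Matrix.tail_cons,
    map_add, map_sub, map_mul, map_neg, Complex.conj_I, Complex.conj_ofReal]
  ring

/-! ### Boundedness of derivatives on `G` -/

/-- On an open set whose closure is compact, the derivative of a `C^∞`
function (on the closure) is bounded. -/
lemma exists_bound_pd3 {G : Set (Fin 3 → ℝ)} (hG : IsOpen G)
    (hGb : Bornology.IsBounded G) {f : (Fin 3 → ℝ) → ℂ}
    (hf : ContDiffOn ℝ (⊤ : ℕ∞) f (closure G)) (i : Fin 3) :
    ∃ M, ∀ x ∈ G, ‖pd3 i f x‖ ≤ M := by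
  have hK : IsCompact (closure G) :=
    Metric.isCompact_of_isClosed_isBounded isClosed_closure hGb.closure
  have loc : ∀ x ∈ closure G, ∃ v : Set (Fin 3 → ℝ), IsOpen v ∧ x ∈ v ∧
      ∃ M, ∀ y ∈ v ∩ G, ‖fderiv ℝ f y‖ ≤ M := by
    intro x hx
    have h1 : ContDiffWithinAt ℝ ((1 : ℕ) : WithTop ℕ∞) f (closure G) x :=
      (hf x hx).of_le (by exact_mod_cast le_top)
    obtain ⟨u, hu, p, hp⟩ := contDiffWithinAt_nat.1 h1
    rw [Set.insert_eq_self.2 hx] at hu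
    obtain ⟨v, hvo, hxv, hvsub⟩ := mem_nhdsWithin.1 hu
    have hxu : x ∈ u := hvsub ⟨hxv, hx⟩
    have hcont : ContinuousWithinAt (fun y => p y 1) u x :=
      (hp.cont 1 (by exact_mod_cast le_rfl)) x hxu
    have hev : ∀ᶠ y in nhdsWithin x u, p y 1 ∈ Metric.ball (p x 1) 1 :=
      hcont (Metric.ball_mem_nhds _ one_pos)
    obtain ⟨w, hwo, hxw, hwsub⟩ := mem_nhdsWithin.1 hev
    refine ⟨v ∩ w, hvo.inter hwo, ⟨hxv, hxw⟩, ‖p x 1‖ + 1, ?_⟩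
    rintro y ⟨⟨hyv, hyw⟩, hyG⟩
    have hyu : u ∈ nhds y := by
      refine mem_nhds_iff.2 ⟨v ∩ G, ?_, hvo.inter hG, ⟨hyv, hyG⟩⟩
      exact fun z hz => hvsub ⟨hz.1, subset_closure hz.2⟩
    have hyu' : y ∈ u := mem_of_mem_nhds hyu
    have hder : HasFDerivAt f
        (continuousMultilinearCurryFin1 ℝ (Fin 3 → ℝ) ℂ (p y 1)) y :=
      (hp.hasFDerivWithinAt (by simp) hyu').hasFDerivAt hyu
    rw [hder.fderiv]
    have hball : p y 1 ∈ Metric.ball (p x 1) 1 := hwsub ⟨hyw, hyu'⟩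
    have : ‖p y 1‖ ≤ ‖p x 1‖ + 1 := by
      have := mem_ball_iff_norm.1 hball
      calc ‖p y 1‖ = ‖p x 1 + (p y 1 - p x 1)‖ := by congr 1; abel
        _ ≤ ‖p x 1‖ + ‖p y 1 - p x 1‖ := norm_add_le _ _
        _ ≤ ‖p x 1‖ + 1 := by
            have : ‖p y 1 - p x 1‖ ≤ 1 := by
              have := mem_ball_iff_norm.1 hball
              linarith
            linarith
    simpa using this
  choose! v hvo hxv M hM using loc
  obtain ⟨t, htsub, hcov⟩ := hK.elim_nhds_subcover v
    (fun x hx => (hvo x hx).mem_nhds (hxv x hx))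
  obtain ⟨M0, hM0⟩ : ∃ M0, ∀ a ∈ t.image M, a ≤ M0 := t.image M |>.exists_le
  refine ⟨M0 * ‖(Pi.single i 1 : Fin 3 → ℝ)‖, fun y hy => ?_⟩
  obtain ⟨z, hz⟩ := Set.mem_iUnion.1 (hcov (subset_closure hy))
  simp only [Set.mem_iUnion, exists_prop] at hz
  obtain ⟨hzt, hyvz⟩ := hz
  have hbound : ‖fderiv ℝ f y‖ ≤ M z := hM z (htsub z hzt) y ⟨hyvz, hy⟩
  have hMz : M z ≤ M0 := hM0 _ (Finset.mem_image_of_mem M hzt)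
  calc ‖pd3 i f y‖ ≤ ‖fderiv ℝ f y‖ * ‖(Pi.single i 1 : Fin 3 → ℝ)‖ :=
        (fderiv ℝ f y).le_opNorm _
    _ ≤ M0 * ‖(Pi.single i 1 : Fin 3 → ℝ)‖ := by
        apply mul_le_mul_of_nonneg_right (hbound.trans hMz) (norm_nonneg _)

/-! ### Integrability machinery -/

/-- Bounded a.e.-measurable functions on `G`. -/
def NiceOn (G : Set (Fin 3 → ℝ)) (h : (Fin 3 → ℝ) → ℂ) : Prop :=
  AEStronglyMeasurable h (volume.restrict G) ∧ ∃ M, ∀ x ∈ G, ‖h x‖ ≤ M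

lemma NiceOn.integrableOn {G : Set (Fin 3 → ℝ)} (hG : IsOpen G)
    (hGb : Bornology.IsBounded G) {f : (Fin 3 → ℝ) → ℂ} (h : NiceOn G f) :
    IntegrableOn f G := by
  obtain ⟨hm, M, hM⟩ := h
  refine Integrable.mono' (g := fun _ => M)
    (integrableOn_const (C := M) hGb.measure_lt_top.ne) hm ?_
  exact (ae_restrict_iff' hG.measurableSet).2 (Filter.Eventually.of_forall hM)

lemma NiceOn.add {G : Set (Fin 3 → ℝ)} {f g : (Fin 3 → ℝ) → ℂ}
    (hf : NiceOn G f) (hg : NiceOn G g) : NiceOn G (fun x => f x + g x) := by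
  obtain ⟨hmf, Mf, hMf⟩ := hf; obtain ⟨hmg, Mg, hMg⟩ := hg
  exact ⟨hmf.add hmg, Mf + Mg, fun x hx =>
    (norm_add_le _ _).trans (add_le_add (hMf x hx) (hMg x hx))⟩

lemma NiceOn.sub {G : Set (Fin 3 → ℝ)} {f g : (Fin 3 → ℝ) → ℂ}
    (hf : NiceOn G f) (hg : NiceOn G g) : NiceOn G (fun x => f x - g x) := by
  obtain ⟨hmf, Mf, hMf⟩ := hf; obtain ⟨hmg, Mg, hMg⟩ := hg
  exact ⟨hmf.sub hmg, Mf + Mg, fun x hx =>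
    (norm_sub_le _ _).trans (add_le_add (hMf x hx) (hMg x hx))⟩

lemma NiceOn.mul {G : Set (Fin 3 → ℝ)} {f g : (Fin 3 → ℝ) → ℂ}
    (hf : NiceOn G f) (hg : NiceOn G g) : NiceOn G (fun x => f x * g x) := by
  obtain ⟨hmf, Mf, hMf⟩ := hf; obtain ⟨hmg, Mg, hMg⟩ := hg
  refine ⟨hmf.mul hmg, max Mf 0 * max Mg 0, fun x hx => ?_⟩
  rw [norm_mul]
  exact mul_le_mul ((hMf x hx).trans (le_max_left _ _))
    ((hMg x hx).trans (le_max_left _ _)) (norm_nonneg _) (le_max_right _ _)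

lemma nice_conj {G : Set (Fin 3 → ℝ)} {f : (Fin 3 → ℝ) → ℂ} (hf : NiceOn G f) :
    NiceOn G (fun x => (starRingEnd ℂ) (f x)) := by
  obtain ⟨hmf, Mf, hMf⟩ := hf
  exact ⟨Complex.continuous_conj.comp_aestronglyMeasurable hmf, Mf,
    fun x hx => by simpa using hMf x hx⟩

lemma nice_const {G : Set (Fin 3 → ℝ)} (c : ℂ) : NiceOn G (fun _ => c) :=
  ⟨aestronglyMeasurable_const, ‖c‖, fun _ _ => le_rfl⟩

lemma nice_smooth {G : Set (Fin 3 → ℝ)} (hG : IsOpen G) (hGb : Bornology.IsBounded G)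
    {f : (Fin 3 → ℝ) → ℂ} (hf : ContDiffOn ℝ (⊤ : ℕ∞) f (closure G)) : NiceOn G f := by
  have hK : IsCompact (closure G) :=
    Metric.isCompact_of_isClosed_isBounded isClosed_closure hGb.closure
  obtain ⟨C, hC⟩ := hK.exists_bound_of_continuousOn hf.continuousOn
  exact ⟨((hf.continuousOn.mono subset_closure).aestronglyMeasurable hG.measurableSet),
    C, fun x hx => hC x (subset_closure hx)⟩

lemma nice_pd3 {G : Set (Fin 3 → ℝ)} (hG : IsOpen G) (hGb : Bornology.IsBounded G)
    (i : Fin 3) {f : (Fin 3 → ℝ) → ℂ} (hf : ContDiffOn ℝ (⊤ : ℕ∞) f (closure G)) :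
    NiceOn G (fun x => pd3 i f x) := by
  obtain ⟨M, hM⟩ := exists_bound_pd3 hG hGb hf i
  exact ⟨((measurable_fderiv_apply_const ℝ f (Pi.single i 1)).aestronglyMeasurable).restrict,
    M, hM⟩

theorem test : True := trivial


lemma cdo_conj {n : WithTop ℕ∞} {s : Set (Fin 3 → ℝ)} {f : (Fin 3 → ℝ) → ℂ}
    (hf : ContDiffOn ℝ n f s) :
    ContDiffOn ℝ n (fun x => (starRingEnd ℂ) (f x)) s :=
  (Complex.conjCLE : ℂ ≃L[ℝ] ℂ).toContinuousLinearMap.contDiff.comp_contDiffOn hf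

lemma cdo_proj {n : WithTop ℕ∞} {s : Set (Fin 3 → ℝ)} {f : (Fin 3 → ℝ) → Fin 3 → ℂ}
    (hf : ContDiffOn ℝ n f s) (j : Fin 3) :
    ContDiffOn ℝ n (fun x => f x j) s :=
  (ContinuousLinearMap.proj j (R := ℝ) (φ := fun _ : Fin 3 => ℂ)).contDiff.comp_contDiffOn hf

attribute [irreducible] NiceOn pd3


set_option maxHeartbeats 1000000
set_option maxRecDepth 16000

/-- the Green formula for the augmented Maxwell operator. -/
theorem green_formula_augmented_maxwell
    (G : Set (Fin 3 → ℝ)) (hG : IsOpen G) (hGb : Bornology.IsBounded G)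
    (ν : (Fin 3 → ℝ) → Fin 3 → ℝ)
    (σb : Measure (Fin 3 → ℝ)) (hσ : ∀ s, σb s = σb (s ∩ frontier G))
    -- the divergence theorem for the domain G with outward unit normal ν and
    -- surface measure σb on ∂G:
    (hdiv : ∀ F : (Fin 3 → ℝ) → Fin 3 → ℂ, ContDiffOn ℝ (⊤ : ℕ∞) F (closure G) →
      (∫ x in G, div3 F x) = ∫ x, (∑ j : Fin 3, F x j * (ν x j : ℂ)) ∂σb)
    (k : ℝ)
    (u1 u2 v1 v2 : (Fin 3 → ℝ) → Fin 3 → ℂ) (a1 a2 b1 b2 : (Fin 3 → ℝ) → ℂ)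
    (hu1 : ContDiffOn ℝ (⊤ : ℕ∞) u1 (closure G)) (hu2 : ContDiffOn ℝ (⊤ : ℕ∞) u2 (closure G))
    (hv1 : ContDiffOn ℝ (⊤ : ℕ∞) v1 (closure G)) (hv2 : ContDiffOn ℝ (⊤ : ℕ∞) v2 (closure G))
    (ha1 : ContDiffOn ℝ (⊤ : ℕ∞) a1 (closure G)) (ha2 : ContDiffOn ℝ (⊤ : ℕ∞) a2 (closure G))
    (hb1 : ContDiffOn ℝ (⊤ : ℕ∞) b1 (closure G)) (hb2 : ContDiffOn ℝ (⊤ : ℕ∞) b2 (closure G)) :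
    (∫ x in G, ip8 (AOp k u1 a1 u2 a2 x) (v1 x, b1 x, v2 x, b2 x)) +
      (∫ x, ip5 (BOp ν u1 u2 a2 x) (QOp ν v1 b1 v2 x) ∂σb) =
    (∫ x in G, ip8 (u1 x, a1 x, u2 x, a2 x) (AOp k v1 b1 v2 b2 x)) +
      (∫ x, ip5 (QOp ν u1 a1 u2 x) (BOp ν v1 v2 b2 x) ∂σb) := by
  -- component smoothness, as individual hypotheses for `assumption`
  have hu1c0 := cdo_proj hu1 0; have hu1c1 := cdo_proj hu1 1; have hu1c2 := cdo_proj hu1 2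
  have hu2c0 := cdo_proj hu2 0; have hu2c1 := cdo_proj hu2 1; have hu2c2 := cdo_proj hu2 2
  have hv1c0 := cdo_proj hv1 0; have hv1c1 := cdo_proj hv1 1; have hv1c2 := cdo_proj hv1 2
  have hv2c0 := cdo_proj hv2 0; have hv2c1 := cdo_proj hv2 1; have hv2c2 := cdo_proj hv2 2
  -- smoothness of the auxiliary fields
  have hWB : ContDiffOn ℝ (⊤ : ℕ∞) (Wf u1 u2 a2 v2 b1 v1) (closure G) := by
    have h0 : ContDiffOn ℝ (⊤ : ℕ∞) (fun x => Wf u1 u2 a2 v2 b1 v1 x 0) (closure G) := by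
      simp only [Wf, Matrix.cons_val_zero]
      repeat
        first
        | assumption
        | apply ContDiffOn.mul
        | apply ContDiffOn.sub
        | apply ContDiffOn.add
        | apply cdo_conj
        | apply contDiffOn_const
    have h1 : ContDiffOn ℝ (⊤ : ℕ∞) (fun x => Wf u1 u2 a2 v2 b1 v1 x 1) (closure G) := by
      simp only [Wf, Matrix.cons_val_one, Matrix.head_cons]
      repeat
        first
        | assumption
        | apply ContDiffOn.mul
        | apply ContDiffOn.sub
        | apply ContDiffOn.add
        | apply cdo_conj
        | apply contDiffOn_const
    have h2 : ContDiffOn ℝ (⊤ : ℕ∞) (fun x => Wf u1 u2 a2 v2 b1 v1 x 2) (closure G) := by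
      simp only [Wf, Matrix.cons_val_two, Matrix.tail_cons, Matrix.head_cons]
      repeat
        first
        | assumption
        | apply ContDiffOn.mul
        | apply ContDiffOn.sub
        | apply ContDiffOn.add
        | apply cdo_conj
        | apply contDiffOn_const
    apply contDiffOn_pi.2
    intro i
    fin_cases i
    · exact h0
    · exact h1
    · exact h2
  have hWQ : ContDiffOn ℝ (⊤ : ℕ∞) (Wf u2 u1 a1 v1 b2 v2) (closure G) := by
    have h0 : ContDiffOn ℝ (⊤ : ℕ∞) (fun x => Wf u2 u1 a1 v1 b2 v2 x 0) (closure G) := by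
      simp only [Wf, Matrix.cons_val_zero]
      repeat
        first
        | assumption
        | apply ContDiffOn.mul
        | apply ContDiffOn.sub
        | apply ContDiffOn.add
        | apply cdo_conj
        | apply contDiffOn_const
    have h1 : ContDiffOn ℝ (⊤ : ℕ∞) (fun x => Wf u2 u1 a1 v1 b2 v2 x 1) (closure G) := by
      simp only [Wf, Matrix.cons_val_one, Matrix.head_cons]
      repeat
        first
        | assumption
        | apply ContDiffOn.mul
        | apply ContDiffOn.sub
        | apply ContDiffOn.add
        | apply cdo_conj
        | apply contDiffOn_const
    have h2 : ContDiffOn ℝ (⊤ : ℕ∞) (fun x => Wf u2 u1 a1 v1 b2 v2 x 2) (closure G) := by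
      simp only [Wf, Matrix.cons_val_two, Matrix.tail_cons, Matrix.head_cons]
      repeat
        first
        | assumption
        | apply ContDiffOn.mul
        | apply ContDiffOn.sub
        | apply ContDiffOn.add
        | apply cdo_conj
        | apply contDiffOn_const
    apply contDiffOn_pi.2
    intro i
    fin_cases i
    · exact h0
    · exact h1
    · exact h2
  -- differentiability at points of G
  have hmem : ∀ x ∈ G, closure G ∈ nhds x := fun x hx =>
    mem_nhds_iff.2 ⟨G, subset_closure, hG, hx⟩
  have hdV : ∀ (f : (Fin 3 → ℝ) → Fin 3 → ℂ), ContDiffOn ℝ (⊤ : ℕ∞) f (closure G) →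
      ∀ x ∈ G, DifferentiableAt ℝ f x := fun f hf x hx =>
    (hf.contDiffAt (hmem x hx)).differentiableAt (by simp)
  have hdS : ∀ (f : (Fin 3 → ℝ) → ℂ), ContDiffOn ℝ (⊤ : ℕ∞) f (closure G) →
      ∀ x ∈ G, DifferentiableAt ℝ f x := fun f hf x hx =>
    (hf.contDiffAt (hmem x hx)).differentiableAt (by simp)
  -- the key pointwise identity on G
  have hkey : Set.EqOn
      (fun x => ip8 (AOp k u1 a1 u2 a2 x) (v1 x, b1 x, v2 x, b2 x)
        + div3 (Wf u1 u2 a2 v2 b1 v1) x)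
      (fun x => ip8 (u1 x, a1 x, u2 x, a2 x) (AOp k v1 b1 v2 b2 x)
        + div3 (Wf u2 u1 a1 v1 b2 v2) x) G := fun x hx =>
    key_identity k u1 u2 v1 v2 a1 a2 b1 b2 x
      (hdV u1 hu1 x hx) (hdV u2 hu2 x hx) (hdV v1 hv1 x hx) (hdV v2 hv2 x hx)
      (hdS a1 ha1 x hx) (hdS a2 ha2 x hx) (hdS b1 hb1 x hx) (hdS b2 hb2 x hx)
  -- integrability
  have hNA : NiceOn G (fun x => ip8 (AOp k u1 a1 u2 a2 x) (v1 x, b1 x, v2 x, b2 x)) := by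
    simp only [ip8, AOp, curl3, grad3, div3, ccross3, Fin.sum_univ_three,
      Matrix.cons_val_zero, Matrix.cons_val_one, Matrix.head_cons, Matrix.cons_val_two,
      Matrix.tail_cons]
    repeat
      first
      | apply NiceOn.add
      | apply NiceOn.sub
      | apply NiceOn.mul
      | apply nice_conj
      | apply nice_const
      | apply nice_pd3 hG hGb
      | apply nice_smooth hG hGb
      | apply ContDiffOn.mul
      | apply ContDiffOn.sub
      | apply ContDiffOn.add
      | apply cdo_conj
      | apply contDiffOn_const
      | assumption
  have hNWB : NiceOn G (fun x => div3 (Wf u1 u2 a2 v2 b1 v1) x) := by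
    simp only [div3, Wf, Matrix.cons_val_zero, Matrix.cons_val_one, Matrix.head_cons,
      Matrix.cons_val_two, Matrix.tail_cons]
    repeat
      first
      | apply NiceOn.add
      | apply nice_pd3 hG hGb
      | apply ContDiffOn.mul
      | apply ContDiffOn.sub
      | apply ContDiffOn.add
      | apply cdo_conj
      | apply contDiffOn_const
      | assumption
  have hNWQ : NiceOn G (fun x => div3 (Wf u2 u1 a1 v1 b2 v2) x) := by
    simp only [div3, Wf, Matrix.cons_val_zero, Matrix.cons_val_one, Matrix.head_cons,
      Matrix.cons_val_two, Matrix.tail_cons]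
    repeat
      first
      | apply NiceOn.add
      | apply nice_pd3 hG hGb
      | apply ContDiffOn.mul
      | apply ContDiffOn.sub
      | apply ContDiffOn.add
      | apply cdo_conj
      | apply contDiffOn_const
      | assumption
  have hintA := hNA.integrableOn hG hGb
  have hintWB := hNWB.integrableOn hG hGb
  have hintWQ := hNWQ.integrableOn hG hGb
  have hintsum : IntegrableOn
      (fun x => ip8 (u1 x, a1 x, u2 x, a2 x) (AOp k v1 b1 v2 b2 x)
        + div3 (Wf u2 u1 a1 v1 b2 v2) x) G :=
    IntegrableOn.congr_fun (hintA.add hintWB) hkey hG.measurableSet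
  have hintC : IntegrableOn
      (fun x => ip8 (u1 x, a1 x, u2 x, a2 x) (AOp k v1 b1 v2 b2 x)) G := by
    have h := hintsum.sub hintWQ
    simpa [Pi.sub_def, add_sub_cancel_right] using h
  -- boundary integrals as volume integrals
  have e1 : (∫ x, ip5 (BOp ν u1 u2 a2 x) (QOp ν v1 b1 v2 x) ∂σb)
      = ∫ x in G, div3 (Wf u1 u2 a2 v2 b1 v1) x := by
    rw [integral_congr_ae (Filter.Eventually.of_forall
      (boundary_B ν u1 u2 v1 v2 a2 b1))]
    exact (hdiv _ hWB).symm
  have e2 : (∫ x, ip5 (QOp ν u1 a1 u2 x) (BOp ν v1 v2 b2 x) ∂σb)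
      = ∫ x in G, div3 (Wf u2 u1 a1 v1 b2 v2) x := by
    rw [integral_congr_ae (Filter.Eventually.of_forall
      (boundary_Q ν u1 u2 v1 v2 a1 b2))]
    exact (hdiv _ hWQ).symm
  rw [e1, e2, ← integral_add hintA hintWB, ← integral_add hintC hintWQ]
  exact setIntegral_congr_fun hG.measurableSet hkey
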